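/- arXiv:0909.0922 — 3 statements merged into one kernel-verified Lean document; each statement's English description precedes it below -/
import Mathlib

section
/- Mertens' first theorem: Σ_{p≤N, p prime} (log p)/p = log N + O(1). -/
open Finset Nat

namespace MertensAux

/-- The set of primes up to `N`. -/
private def S (N : ℕ) : Finset ℕ := (Finset.Icc 1 N).filter Nat.Prime

private lemma mem_S {N p : ℕ} : p ∈ S N ↔ p.Prime ∧ p ≤ N := by
  simp only [S, mem_filter, mem_Icc]
  constructor
  · rintro ⟨⟨_, h2⟩, hp⟩; exact ⟨hp, h2⟩
  · rintro ⟨hp, h2⟩; exact ⟨⟨hp.one_lt.le, h2⟩, hp⟩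

private lemma primeFactors_factorial {N : ℕ} : (N !).primeFactors = S N := by
  ext p
  rw [Nat.mem_primeFactors, mem_S]
  constructor
  · rintro ⟨hp, hd, _⟩
    exact ⟨hp, (Nat.Prime.dvd_factorial hp).mp hd⟩
  · rintro ⟨hp, hle⟩
    exact ⟨hp, (Nat.Prime.dvd_factorial hp).mpr hle, Nat.factorial_ne_zero N⟩

/-- Legendre decomposition of `log N!`. -/
private lemma log_factorial_eq (N : ℕ) :
    Real.log (N !) = ∑ p ∈ S N, ((N !).factorization p : ℝ) * Real.log p := by
  conv_lhs => rw [← Nat.factorization_prod_pow_eq_self (Nat.factorial_ne_zero N)]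
  rw [Nat.prod_factorization_eq_prod_primeFactors, ← primeFactors_factorial]
  push_cast
  rw [Real.log_prod]
  · refine Finset.sum_congr rfl fun p hp => ?_
    rw [Real.log_pow, mul_comm]
  · intro p hp
    have hpp : p.Prime := Nat.prime_of_mem_primeFactors hp
    have : (0:ℝ) < p := by exact_mod_cast hpp.pos
    positivity

/-- Lower bound for the exponent: `N / p ≤ v_p(N!)`. -/
private lemma div_le_factorization {N p : ℕ} (hp : p.Prime) (hpN : p ≤ N) :
    N / p ≤ (N !).factorization p := by
  haveI : Fact p.Prime := ⟨hp⟩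
  rw [Nat.factorization_def _ hp,
    padicValNat_factorial (p := p) (n := N) (b := Nat.log p N + 1) (Nat.lt_succ_self _)]
  have h1 : 1 ∈ Finset.Ico 1 (Nat.log p N + 1) := by
    rw [Finset.mem_Ico]
    exact ⟨le_refl _, by
      have := Nat.log_pos hp.one_lt hpN
      omega⟩
  calc N / p = N / p ^ 1 := by rw [pow_one]
    _ ≤ ∑ i ∈ Finset.Ico 1 (Nat.log p N + 1), N / p ^ i :=
        Finset.single_le_sum (f := fun i => N / p ^ i) (fun i _ => Nat.zero_le _) h1

/-- Upper bound for the exponent: `v_p(N!) ≤ N / (p - 1)` (real division). -/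
private lemma factorization_le {N p : ℕ} (hp : p.Prime) :
    ((N !).factorization p : ℝ) ≤ (N : ℝ) / ((p : ℝ) - 1) := by
  haveI : Fact p.Prime := ⟨hp⟩
  have hp1 : (1 : ℝ) < p := by exact_mod_cast hp.one_lt
  have hp0 : (0 : ℝ) < p := lt_trans one_pos hp1
  set b := Nat.log p N + 1 with hb
  rw [Nat.factorization_def _ hp, padicValNat_factorial (p := p) (n := N) (b := b)
    (Nat.lt_succ_self _)]
  push_cast
  have hr0 : (0 : ℝ) ≤ 1 / p := by positivity
  have hr1 : 1 / (p : ℝ) < 1 := by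
    rw [div_lt_one hp0]; exact hp1
  have key : ∀ i ∈ Finset.Ico 1 b, ((N / p ^ i : ℕ) : ℝ) ≤ (N : ℝ) * (1 / p) ^ i := by
    intro i _
    calc ((N / p ^ i : ℕ) : ℝ) ≤ (N : ℝ) / (p : ℝ) ^ i := by
          rw [← Nat.cast_pow]; exact Nat.cast_div_le
      _ = (N : ℝ) * (1 / p) ^ i := by rw [div_pow, one_pow]; ring
  calc (∑ i ∈ Finset.Ico 1 b, ((N / p ^ i : ℕ) : ℝ))
      ≤ ∑ i ∈ Finset.Ico 1 b, (N : ℝ) * (1 / p) ^ i := Finset.sum_le_sum key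
    _ = (N : ℝ) * ∑ i ∈ Finset.Ico 1 b, (1 / p : ℝ) ^ i := by rw [Finset.mul_sum]
    _ ≤ (N : ℝ) * (1 / ((p : ℝ) - 1)) := by
        refine mul_le_mul_of_nonneg_left ?_ (Nat.cast_nonneg N)
        have hsum : ∑ i ∈ Finset.Ico 1 b, (1 / p : ℝ) ^ i
            = (∑ i ∈ Finset.range b, (1 / p : ℝ) ^ i) - 1 := by
          rw [Finset.range_eq_Ico,
            ← Finset.sum_Ico_consecutive _ (Nat.zero_le 1) (by omega : 1 ≤ b)]
          simp
        rw [hsum]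
        have hgeo : ∑ i ∈ Finset.range b, (1 / p : ℝ) ^ i ≤ (1 - 1 / (p : ℝ))⁻¹ := by
          refine Summable.sum_le_tsum (L := SummationFilter.unconditional ℕ) _ (fun i _ => by positivity) ?_ |>.trans ?_
          · exact summable_geometric_of_lt_one hr0 hr1
          · rw [tsum_geometric_of_lt_one hr0 hr1]
        have hne : (p : ℝ) - 1 ≠ 0 := by linarith
        have heq : (1 - 1 / (p : ℝ))⁻¹ - 1 = 1 / ((p : ℝ) - 1) := by
          rw [one_sub_div (ne_of_gt hp0), inv_div]
          field_simp
          ring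
        linarith [hgeo]
    _ = (N : ℝ) / ((p : ℝ) - 1) := by ring

/-- Chebyshev-type bound `θ(N) ≤ N log 4` via the primorial. -/
private lemma theta_le (N : ℕ) : ∑ p ∈ S N, Real.log p ≤ (N : ℝ) * Real.log 4 := by
  have hS : S N = (Finset.range (N + 1)).filter Nat.Prime := by
    ext p
    rw [mem_S, mem_filter, Finset.mem_range]
    constructor
    · rintro ⟨hp, h⟩; exact ⟨by omega, hp⟩
    · rintro ⟨h, hp⟩; exact ⟨hp, by omega⟩
  rw [hS]
  have := primorial_le_4_pow N
  have hlog : Real.log (primorial N) ≤ Real.log (4 ^ N) := by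
    apply Real.log_le_log (by exact_mod_cast primorial_pos N)
    exact_mod_cast this
  rw [Real.log_pow] at hlog
  calc ∑ p ∈ (Finset.range (N + 1)).filter Nat.Prime, Real.log p
      = Real.log (primorial N) := by
        rw [primorial]
        push_cast
        rw [Real.log_prod]
        intro p hp
        have hpp := (Finset.mem_filter.mp hp).2
        exact Nat.cast_ne_zero.mpr hpp.pos.ne'
    _ ≤ (N : ℝ) * Real.log 4 := hlog

/-- Elementary Stirling lower bound. -/
private lemma stirling_lower (N : ℕ) : (N : ℝ) * Real.log N - N ≤ Real.log (N !) := by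
  induction N with
  | zero => simp
  | succ n ih =>
    rw [Nat.factorial_succ]
    push_cast
    rw [Real.log_mul (by positivity) (by exact_mod_cast (Nat.factorial_pos n).ne')]
    rcases Nat.eq_zero_or_pos n with hn | hn
    · subst hn; simp
    have hn0 : (0 : ℝ) < n := by exact_mod_cast hn
    have key : (n : ℝ) * Real.log (n + 1) ≤ (n : ℝ) * Real.log n + 1 := by
      have h1 : Real.log ((n + 1) / n) ≤ (n + 1) / n - 1 :=
        Real.log_le_sub_one_of_pos (by positivity)
      have h2 : Real.log ((n + 1 : ℝ) / n) = Real.log (n + 1) - Real.log n :=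
        Real.log_div (by positivity) (ne_of_gt hn0)
      have h3 : ((n : ℝ) + 1) / n - 1 = 1 / n := by field_simp; ring
      rw [h2, h3] at h1
      have := mul_le_mul_of_nonneg_left h1 (le_of_lt hn0)
      rw [mul_one_div, div_self (ne_of_gt hn0)] at this
      linarith
    linarith
  
/-- Elementary Stirling upper bound. -/
private lemma stirling_upper (N : ℕ) : Real.log (N !) ≤ (N : ℝ) * Real.log N := by
  induction N with
  | zero => simp
  | succ n ih =>
    rw [Nat.factorial_succ]
    push_cast
    rw [Real.log_mul (by positivity) (by exact_mod_cast (Nat.factorial_pos n).ne')]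
    have hmono : (n : ℝ) * Real.log n ≤ (n : ℝ) * Real.log (n + 1) := by
      apply mul_le_mul_of_nonneg_left _ (Nat.cast_nonneg n)
      rcases Nat.eq_zero_or_pos n with hn | hn
      · subst hn; simp [Real.log_nonneg]
      · exact Real.log_le_log (by exact_mod_cast hn) (by linarith [Nat.cast_nonneg (α := ℝ) n])
    linarith

/-- The convergent tail sum constant. -/
noncomputable def C0 : ℝ := 4 * ∑' n : ℕ, ((n : ℝ) ^ (-(3/2) : ℝ))

private lemma summable_rpow : Summable (fun n : ℕ => ((n : ℝ) ^ (-(3/2) : ℝ))) :=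
  Real.summable_nat_rpow.mpr (by norm_num)

private lemma C0_nonneg : 0 ≤ C0 := by
  have : 0 ≤ ∑' n : ℕ, ((n : ℝ) ^ (-(3/2) : ℝ)) :=
    tsum_nonneg fun n => Real.rpow_nonneg (Nat.cast_nonneg n) _
  unfold C0; linarith

private lemma tail_bound (N : ℕ) :
    ∑ p ∈ S N, Real.log p / ((p : ℝ) * ((p : ℝ) - 1)) ≤ C0 := by
  have key : ∀ p ∈ S N, Real.log p / ((p : ℝ) * ((p : ℝ) - 1))
      ≤ 4 * ((p : ℝ) ^ (-(3/2) : ℝ)) := by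
    intro p hp
    have hpp := (mem_S.mp hp).1
    have hp2 : (2 : ℝ) ≤ p := by exact_mod_cast hpp.two_le
    have hp0 : (0 : ℝ) < p := by linarith
    have hsq : (0 : ℝ) < Real.sqrt p := Real.sqrt_pos.mpr hp0
    have hss : Real.sqrt p * Real.sqrt p = (p : ℝ) := Real.mul_self_sqrt hp0.le
    -- log p ≤ 2 * sqrt p
    have hlog : Real.log p ≤ 2 * Real.sqrt p := by
      have h1 : Real.log (Real.sqrt p) ≤ Real.sqrt p - 1 :=
        Real.log_le_sub_one_of_pos hsq
      have h2 : Real.log (Real.sqrt (p : ℝ)) = Real.log p / 2 := Real.log_sqrt hp0.le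
      linarith
    have hdpos : (0 : ℝ) < (p : ℝ) * ((p : ℝ) - 1) := by nlinarith
    have hd : (p : ℝ) ^ 2 / 2 ≤ (p : ℝ) * ((p : ℝ) - 1) := by nlinarith
    have h3 : Real.log p / ((p : ℝ) * ((p : ℝ) - 1)) ≤ (2 * Real.sqrt p) / ((p : ℝ) ^ 2 / 2) :=
      div_le_div₀ (by positivity) hlog (by positivity) hd
    have h4 : (2 * Real.sqrt p) / ((p : ℝ) ^ 2 / 2) = 4 / ((p : ℝ) * Real.sqrt p) := by
      rw [div_eq_div_iff (by positivity) (by positivity)]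
      nlinarith [hss]
    have h5 : ((p : ℝ) ^ (-(3/2) : ℝ)) = ((p : ℝ) * Real.sqrt p)⁻¹ := by
      rw [Real.rpow_neg hp0.le, show (3/2 : ℝ) = 1 + 1/2 by norm_num,
        Real.rpow_add hp0, Real.rpow_one, ← Real.sqrt_eq_rpow]
    rw [h5]
    rw [h4] at h3
    rw [div_eq_mul_inv] at h3
    exact h3
  calc ∑ p ∈ S N, Real.log p / ((p : ℝ) * ((p : ℝ) - 1))
      ≤ ∑ p ∈ S N, 4 * ((p : ℝ) ^ (-(3/2) : ℝ)) := Finset.sum_le_sum key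
    _ = 4 * ∑ p ∈ S N, ((p : ℝ) ^ (-(3/2) : ℝ)) := by rw [Finset.mul_sum]
    _ ≤ 4 * ∑' n : ℕ, ((n : ℝ) ^ (-(3/2) : ℝ)) := by
        refine mul_le_mul_of_nonneg_left ?_ (by norm_num)
        exact Summable.sum_le_tsum _ (fun i _ => Real.rpow_nonneg (Nat.cast_nonneg i) _) summable_rpow
    _ = C0 := rfl

end MertensAux

theorem mertens_first :
    ∃ C : ℝ, 0 < C ∧ ∀ N : ℕ, 2 ≤ N →
      |(∑ p ∈ (Finset.Icc 1 N).filter Nat.Prime, Real.log p / p) - Real.log N| ≤ C := by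
  refine ⟨MertensAux.C0 + 2, by linarith [MertensAux.C0_nonneg], fun N hN => ?_⟩
  have hN0 : (0 : ℝ) < N := by
    have : (2 : ℝ) ≤ N := by exact_mod_cast hN
    linarith
  set T : ℝ := ∑ p ∈ (Finset.Icc 1 N).filter Nat.Prime, Real.log p / p with hT
  have hTS : T = ∑ p ∈ MertensAux.S N, Real.log p / p := rfl
  have hid := MertensAux.log_factorial_eq N
  have hlogp_nonneg : ∀ p ∈ MertensAux.S N, (0 : ℝ) ≤ Real.log p := fun p hp =>
    Real.log_nonneg (by exact_mod_cast (MertensAux.mem_S.mp hp).1.one_le)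
  -- Lower bound on log N! in terms of T
  have hlow : (N : ℝ) * T - (N : ℝ) * Real.log 4 ≤ Real.log (N !) := by
    have step : ∀ p ∈ MertensAux.S N,
        (N : ℝ) * (Real.log p / p) - Real.log p ≤ ((N !).factorization p : ℝ) * Real.log p := by
      intro p hp
      obtain ⟨hpp, hpN⟩ := MertensAux.mem_S.mp hp
      have hp0 : (0 : ℝ) < p := by exact_mod_cast hpp.pos
      have h1 : (N : ℝ) / p - 1 ≤ ((N / p : ℕ) : ℝ) := by
        have hmod := Nat.div_add_mod N p
        have hlt : N < p * (N / p) + p := by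
          have := Nat.mod_lt N hpp.pos
          omega
        have : (N : ℝ) < (p : ℝ) * ((N / p : ℕ) : ℝ) + p := by exact_mod_cast hlt
        rw [div_sub_one (ne_of_gt hp0), div_le_iff₀ hp0]
        nlinarith
      have h2 : ((N / p : ℕ) : ℝ) ≤ ((N !).factorization p : ℝ) := by
        exact_mod_cast MertensAux.div_le_factorization hpp hpN
      have h3 : (N : ℝ) * (Real.log p / p) - Real.log p = ((N : ℝ) / p - 1) * Real.log p := by
        ring
      rw [h3]
      exact mul_le_mul_of_nonneg_right (le_trans h1 h2) (hlogp_nonneg p hp)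
    have hsum := Finset.sum_le_sum step
    rw [Finset.sum_sub_distrib, ← Finset.mul_sum, ← hTS] at hsum
    have hth := MertensAux.theta_le N
    rw [hid]
    linarith
  -- Upper bound on log N! in terms of T
  have hhigh : Real.log (N !) ≤ (N : ℝ) * T + (N : ℝ) * MertensAux.C0 := by
    have step : ∀ p ∈ MertensAux.S N,
        ((N !).factorization p : ℝ) * Real.log p
          ≤ (N : ℝ) * (Real.log p / p) + (N : ℝ) * (Real.log p / ((p : ℝ) * ((p : ℝ) - 1))) := by
      intro p hp
      obtain ⟨hpp, hpN⟩ := MertensAux.mem_S.mp hp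
      have hp2 : (2 : ℝ) ≤ p := by exact_mod_cast hpp.two_le
      have hp0 : (0 : ℝ) < p := by linarith
      have hp1 : (0 : ℝ) < (p : ℝ) - 1 := by linarith
      have h1 : ((N !).factorization p : ℝ) * Real.log p
          ≤ ((N : ℝ) / ((p : ℝ) - 1)) * Real.log p :=
        mul_le_mul_of_nonneg_right (MertensAux.factorization_le hpp) (hlogp_nonneg p hp)
      have h2 : (N : ℝ) / ((p : ℝ) - 1) * Real.log p
          = (N : ℝ) * (Real.log p / p) + (N : ℝ) * (Real.log p / ((p : ℝ) * ((p : ℝ) - 1))) := by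
        field_simp
        ring
      rw [h2] at h1
      exact h1
    have hsum := Finset.sum_le_sum step
    rw [Finset.sum_add_distrib, ← Finset.mul_sum, ← Finset.mul_sum, ← hTS] at hsum
    have htail := MertensAux.tail_bound N
    have : (N : ℝ) * (∑ p ∈ MertensAux.S N, Real.log p / ((p : ℝ) * ((p : ℝ) - 1)))
        ≤ (N : ℝ) * MertensAux.C0 := mul_le_mul_of_nonneg_left htail hN0.le
    rw [hid]
    linarith
  have hsl := MertensAux.stirling_lower N
  have hsu := MertensAux.stirling_upper N
  have hlog4 : Real.log 4 ≤ 2 := by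
    have h2 : Real.log 4 = 2 * Real.log 2 := by
      rw [show (4 : ℝ) = 2 ^ 2 by norm_num, Real.log_pow]
      push_cast; ring
    have := Real.log_two_lt_d9
    rw [h2]
    linarith
  -- combine
  have hub : T - Real.log N ≤ Real.log 4 := by
    have : (N : ℝ) * T ≤ (N : ℝ) * Real.log N + (N : ℝ) * Real.log 4 := by linarith
    nlinarith
  have hlb : Real.log N - T ≤ 1 + MertensAux.C0 := by
    have : (N : ℝ) * Real.log N - N ≤ (N : ℝ) * T + (N : ℝ) * MertensAux.C0 := by linarith
    nlinarith
  have hC0 := MertensAux.C0_nonneg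
  rw [abs_le]
  constructor
  · linarith
  · linarith
end

section
/- Chebyshev–Mertens theorem: Σ_{p≤N, p prime} 1/p = log log N + O(1) for N ≥ 3. -/
open Finset

namespace ChebMertens

open Real MeasureTheory

/-- The Mertens sum `∑_{p ≤ N} log p / p`. -/
noncomputable def mert (N : ℕ) : ℝ :=
  ∑ p ∈ (Finset.Icc 1 N).filter Nat.Prime, Real.log p / p

/-- The coefficient sequence for Abel summation. -/
noncomputable def c (k : ℕ) : ℝ := if k.Prime then Real.log k / k else 0

lemma c_nonneg (k : ℕ) : 0 ≤ c k := by
  unfold c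
  split
  · positivity
  · exact le_rfl

lemma sum_c (n : ℕ) : ∑ k ∈ Icc 0 n, c k = mert n := by
  rw [mert, Finset.sum_filter]
  refine (Finset.sum_subset (Finset.Icc_subset_Icc_left (Nat.zero_le 1)) ?_).symm
  intro x hx hx'
  have hx0 : x = 0 := by simp only [mem_Icc] at hx hx'; omega
  simp [c, hx0]

lemma log_le_two_sqrt {x : ℝ} (hx : 0 ≤ x) : Real.log x ≤ 2 * Real.sqrt x := by
  rcases eq_or_lt_of_le hx with h | h
  · simp [← h]
  · have hs : 0 < Real.sqrt x := Real.sqrt_pos.mpr h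
    have h2 := Real.log_le_sub_one_of_pos hs
    have hl : Real.log x = 2 * Real.log (Real.sqrt x) := by
      rw [Real.log_sqrt hx]; ring
    nlinarith

lemma term_bound (n : ℕ) (hn : 2 ≤ n) :
    Real.log n / (n * ((n : ℝ) - 1)) ≤
      8 * (1 / Real.sqrt ((n : ℝ) - 1) - 1 / Real.sqrt n) := by
  have hn2 : (2 : ℝ) ≤ n := by exact_mod_cast hn
  have h1 : (1 : ℝ) ≤ (n : ℝ) - 1 := by linarith
  set a := Real.sqrt ((n : ℝ) - 1) with ha
  set b := Real.sqrt (n : ℝ) with hb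
  have ha2 : a ^ 2 = (n : ℝ) - 1 := Real.sq_sqrt (by linarith)
  have hb2 : b ^ 2 = (n : ℝ) := Real.sq_sqrt (by linarith)
  have ha1 : 1 ≤ a := by
    rw [show (1:ℝ) = Real.sqrt 1 by simp [Real.sqrt_one], ha]
    exact Real.sqrt_le_sqrt h1
  have hab : a ≤ b := Real.sqrt_le_sqrt (by linarith)
  have hb1 : 1 ≤ b := le_trans ha1 hab
  have hba : b ≤ 3 * a := by nlinarith
  have hlog : Real.log n ≤ 2 * b := log_le_two_sqrt (by linarith)
  have hsum : (b - a) * (b + a) = 1 := by nlinarith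
  have key : 8 * (1 / a - 1 / b) = 8 * (b - a) / (a * b) := by
    field_simp
  rw [key, div_le_div_iff₀ (by nlinarith) (by nlinarith)]
  have hd : 0 ≤ b - a := sub_nonneg.mpr hab
  have h4 : 1 ≤ 4 * ((b - a) * a) := by nlinarith
  have h5 : 2 * a * b ^ 2 ≤ 8 * (b - a) * ((n : ℝ) * ((n:ℝ) - 1)) := by
    have hnn : 0 ≤ 2 * a * b ^ 2 := by positivity
    have hrw : (n : ℝ) * ((n:ℝ) - 1) = b ^ 2 * a ^ 2 := by rw [ha2, hb2]
    rw [hrw]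
    nlinarith [mul_nonneg hnn (sub_nonneg.mpr h4)]
  have h6 : Real.log n * (a * b) ≤ 2 * b * (a * b) := by
    exact mul_le_mul_of_nonneg_right hlog (by positivity)
  nlinarith

lemma tele_eq (N : ℕ) (hN : 1 ≤ N) :
    ∑ n ∈ Icc 2 N, (1 / Real.sqrt ((n : ℝ) - 1) - 1 / Real.sqrt n)
      = 1 - 1 / Real.sqrt N := by
  induction N with
  | zero => omega
  | succ M ih =>
    rcases Nat.lt_or_ge M 1 with hM | hM
    · interval_cases M
      simp
    · rw [Finset.sum_Icc_succ_top (by omega), ih hM]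
      push_cast
      have : Real.sqrt ((M:ℝ) + 1 - 1) = Real.sqrt M := by norm_num
      rw [this]
      ring

lemma telescope_sum (N : ℕ) :
    ∑ n ∈ Icc 2 N, Real.log n / (n * ((n : ℝ) - 1)) ≤ 8 := by
  rcases Nat.lt_or_ge N 1 with hN | hN
  · interval_cases N
    simp
  calc ∑ n ∈ Icc 2 N, Real.log n / (n * ((n : ℝ) - 1))
      ≤ ∑ n ∈ Icc 2 N, 8 * (1 / Real.sqrt ((n : ℝ) - 1) - 1 / Real.sqrt n) := by
        refine Finset.sum_le_sum fun n hn => term_bound n ?_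
        simp only [mem_Icc] at hn; exact hn.1
    _ = 8 * (1 - 1 / Real.sqrt N) := by rw [← Finset.mul_sum, tele_eq N hN]
    _ ≤ 8 := by
        have : 0 ≤ 1 / Real.sqrt N := by positivity
        linarith

lemma primes_set_eq (N : ℕ) :
    (Finset.range (N + 1)).filter Nat.Prime = (Finset.Icc 1 N).filter Nat.Prime := by
  ext p
  simp only [mem_filter, mem_range, mem_Icc, Nat.lt_succ_iff]
  constructor
  · rintro ⟨h1, h2⟩; exact ⟨⟨h2.one_lt.le.trans' (by norm_num), h1⟩, h2⟩
  · rintro ⟨⟨_, h1⟩, h2⟩; exact ⟨h1, h2⟩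

lemma theta_le (N : ℕ) :
    ∑ p ∈ (Finset.Icc 1 N).filter Nat.Prime, Real.log p ≤ N * Real.log 4 := by
  have h1 : ∑ p ∈ (Finset.Icc 1 N).filter Nat.Prime, Real.log p
      = Real.log (primorial N : ℝ) := by
    rw [primorial, ← primes_set_eq, Nat.cast_prod, Real.log_prod]
    intro p hp
    have := (mem_filter.mp hp).2.pos
    positivity
  rw [h1]
  have h2 : (primorial N : ℝ) ≤ (4 : ℝ) ^ N := by
    exact_mod_cast primorial_le_4_pow N
  calc Real.log (primorial N : ℝ) ≤ Real.log ((4:ℝ) ^ N) :=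
        Real.log_le_log (by exact_mod_cast (primorial_pos N)) h2
    _ = N * Real.log 4 := by rw [Real.log_pow]

lemma fac_primeFactors (N : ℕ) :
    (Nat.factorial N).primeFactors = (Finset.Icc 1 N).filter Nat.Prime := by
  ext p
  simp only [Nat.mem_primeFactors, mem_filter, mem_Icc]
  constructor
  · rintro ⟨hp, hdvd, -⟩
    exact ⟨⟨hp.one_lt.le.trans' (by norm_num), (Nat.Prime.dvd_factorial hp).mp hdvd⟩, hp⟩
  · rintro ⟨⟨-, hpN⟩, hp⟩
    exact ⟨hp, (Nat.Prime.dvd_factorial hp).mpr hpN, Nat.factorial_ne_zero N⟩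

lemma log_factorial_eq (N : ℕ) :
    Real.log (Nat.factorial N : ℝ) =
      ∑ p ∈ (Finset.Icc 1 N).filter Nat.Prime,
        ((Nat.factorial N).factorization p : ℝ) * Real.log p := by
  conv_lhs => rw [← Nat.factorization_prod_pow_eq_self (Nat.factorial_ne_zero N)]
  rw [Nat.prod_factorization_eq_prod_primeFactors, fac_primeFactors, Nat.cast_prod,
    Real.log_prod]
  · refine Finset.sum_congr rfl fun p hp => ?_
    rw [Nat.cast_pow, Real.log_pow]
  · intro p hp
    have := ((mem_filter.mp hp).2).pos
    positivity

lemma legendre_eq {p N : ℕ} (hp : p.Prime) :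
    (Nat.factorial N).factorization p = ∑ i ∈ Finset.Ico 1 (N + 1), N / p ^ i := by
  haveI := Fact.mk hp
  rw [Nat.factorization_def _ hp]
  exact padicValNat_factorial (Nat.lt_succ_of_le (Nat.log_le_self p N))

lemma legendre_lo {p N : ℕ} (hp : p.Prime) (hpN : p ≤ N) :
    (N : ℝ) / p - 1 ≤ ((Nat.factorial N).factorization p : ℝ) := by
  have hp0 : 0 < p := hp.pos
  have h1 : N / p ≤ (Nat.factorial N).factorization p := by
    rw [legendre_eq hp]
    refine Finset.single_le_sum (f := fun i => N / p ^ i) (fun i _ => Nat.zero_le _) ?_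
      |>.trans_eq' (by rw [pow_one])
    simp only [Finset.mem_Ico]
    omega
  have h2 : (N : ℝ) / p - 1 ≤ (N / p : ℕ) := by
    have hm := Nat.div_add_mod N p
    have hl : N % p < p := Nat.mod_lt _ hp.pos
    rw [sub_le_iff_le_add, div_le_iff₀ (by positivity)]
    have hmr : (p:ℝ) * ((N / p : ℕ) : ℝ) + ((N % p : ℕ) : ℝ) = (N : ℝ) := by
      exact_mod_cast hm
    have hlr : ((N % p : ℕ) : ℝ) < (p : ℝ) := by exact_mod_cast hl
    nlinarith
  exact h2.trans (by exact_mod_cast h1)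

lemma legendre_up {p N : ℕ} (hp : p.Prime) (hpN : p ≤ N) :
    ((Nat.factorial N).factorization p : ℝ) ≤ (N : ℝ) / p + N / (p * ((p : ℝ) - 1)) := by
  have hp2 : (2 : ℝ) ≤ p := by exact_mod_cast hp.two_le
  have hp0 : (0 : ℝ) < p := by linarith
  have hN2 : 2 ≤ N := le_trans hp.two_le hpN
  rw [legendre_eq hp]
  push_cast
  have hstep : ∀ i ∈ Finset.Ico 1 (N + 1), ((N / p ^ i : ℕ) : ℝ) ≤ (N : ℝ) * ((p:ℝ)⁻¹) ^ i := by
    intro i _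
    calc ((N / p ^ i : ℕ) : ℝ) ≤ (N : ℝ) / (p : ℝ) ^ i := by
          exact Nat.cast_div_le.trans (by push_cast; exact le_rfl)
      _ = (N : ℝ) * ((p:ℝ)⁻¹) ^ i := by rw [div_eq_mul_inv, inv_pow]
  calc (∑ i ∈ Finset.Ico 1 (N + 1), ((N / p ^ i : ℕ) : ℝ))
      ≤ ∑ i ∈ Finset.Ico 1 (N + 1), (N : ℝ) * ((p:ℝ)⁻¹) ^ i :=
        Finset.sum_le_sum hstep
    _ = (N:ℝ) * ((p:ℝ)⁻¹ + ∑ i ∈ Finset.Ico 2 (N + 1), ((p:ℝ)⁻¹) ^ i) := by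
        rw [← Finset.sum_Ico_consecutive _ (by omega : 1 ≤ 2) (by omega : 2 ≤ N + 1),
          show Finset.Ico 1 2 = {1} by rfl, Finset.sum_singleton, pow_one, mul_add,
          Finset.mul_sum]
    _ ≤ (N:ℝ)/p + (N:ℝ) / (p * ((p:ℝ) - 1)) := by
        have hr : (0:ℝ) < (p:ℝ)⁻¹ := by positivity
        have hr1 : (p:ℝ)⁻¹ < 1 := by
          rw [inv_lt_one_iff₀]; right; linarith
        have hgeo : ∑ i ∈ Finset.Ico 2 (N + 1), ((p:ℝ)⁻¹) ^ i
            ≤ ((p:ℝ)⁻¹) ^ 2 / (1 - (p:ℝ)⁻¹) := by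
          rw [geom_sum_Ico' (by linarith) (by omega)]
          rw [div_le_div_iff₀ (by linarith) (by linarith)]
          have : (0:ℝ) ≤ ((p:ℝ)⁻¹) ^ (N+1) := by positivity
          nlinarith
        have heq : ((p:ℝ)⁻¹) ^ 2 / (1 - (p:ℝ)⁻¹) = 1 / (p * ((p:ℝ) - 1)) := by
          rw [div_eq_div_iff (by linarith) (by nlinarith)]
          field_simp
        rw [heq] at hgeo
        have hNn : (0:ℝ) ≤ N := Nat.cast_nonneg N
        calc (N:ℝ) * ((p:ℝ)⁻¹ + ∑ i ∈ Finset.Ico 2 (N + 1), ((p:ℝ)⁻¹) ^ i)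
            ≤ (N:ℝ) * ((p:ℝ)⁻¹ + 1 / (p * ((p:ℝ) - 1))) := by
              exact mul_le_mul_of_nonneg_left (by linarith) hNn
          _ = (N:ℝ)/p + (N:ℝ) / (p * ((p:ℝ) - 1)) := by
              field_simp

lemma log_factorial_up (N : ℕ) : Real.log (Nat.factorial N : ℝ) ≤ N * Real.log N := by
  have h : (Nat.factorial N : ℝ) ≤ (N : ℝ) ^ N := by
    exact_mod_cast Nat.factorial_le_pow N
  calc Real.log (Nat.factorial N : ℝ) ≤ Real.log ((N:ℝ) ^ N) :=
        Real.log_le_log (by exact_mod_cast Nat.factorial_pos N) h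
    _ = N * Real.log N := by rw [Real.log_pow]

lemma log_factorial_lo (N : ℕ) : (N : ℝ) * Real.log N - N ≤ Real.log (Nat.factorial N : ℝ) := by
  rcases Nat.eq_zero_or_pos N with rfl | hN
  · simp
  have hfac : (0:ℝ) < (Nat.factorial N : ℝ) := by exact_mod_cast Nat.factorial_pos N
  have h := Real.pow_div_factorial_le_exp (x := (N:ℝ)) (Nat.cast_nonneg N) N
  have h2 : (N:ℝ) ^ N ≤ (Nat.factorial N : ℝ) * Real.exp N := by
    rw [div_le_iff₀ hfac] at h
    linarith [h]
  have h3 := Real.log_le_log (by positivity : (0:ℝ) < (N:ℝ) ^ N) h2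
  rw [Real.log_pow, Real.log_mul (ne_of_gt hfac) (Real.exp_ne_zero _), Real.log_exp] at h3
  linarith

/-- Mertens' first theorem with explicit constant. -/
lemma mertens1 (N : ℕ) (h : 1 ≤ N) : |mert N - Real.log N| ≤ 12 := by
  set S := (Finset.Icc 1 N).filter Nat.Prime with hS
  have hN0 : (0:ℝ) < N := by exact_mod_cast h
  have hmem : ∀ p ∈ S, p.Prime ∧ p ≤ N := by
    intro p hp; simp only [hS, mem_filter, mem_Icc] at hp; exact ⟨hp.2, hp.1.2⟩
  have hlogp : ∀ p ∈ S, (0:ℝ) ≤ Real.log p := fun p hp =>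
    Real.log_nonneg (by exact_mod_cast (hmem p hp).1.one_lt.le)
  have hkey := log_factorial_eq N
  have htel : ∑ p ∈ S, Real.log p / (p * ((p:ℝ) - 1)) ≤ 8 := by
    refine le_trans ?_ (telescope_sum N)
    refine Finset.sum_le_sum_of_subset_of_nonneg ?_ ?_
    · intro p hp
      simp only [mem_Icc]
      exact ⟨(hmem p hp).1.two_le, (hmem p hp).2⟩
    · intro n hn hn'
      simp only [mem_Icc] at hn
      have h2 : (2:ℝ) ≤ n := by exact_mod_cast hn.1
      have : (0:ℝ) ≤ Real.log n := Real.log_nonneg (by linarith)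
      have : (0:ℝ) < (n:ℝ) * ((n:ℝ) - 1) := by nlinarith
      positivity
  have e1 : ∑ p ∈ S, ((N:ℝ)/p + (N:ℝ)/(p * ((p:ℝ)-1))) * Real.log p
      = N * mert N + N * ∑ p ∈ S, Real.log p / (p * ((p:ℝ) - 1)) := by
    rw [mert, ← hS, Finset.mul_sum, Finset.mul_sum, ← Finset.sum_add_distrib]
    refine Finset.sum_congr rfl fun p hp => ?_
    have hp2 : (2:ℝ) ≤ p := by exact_mod_cast (hmem p hp).1.two_le
    have hp1 : (0:ℝ) < p := by linarith
    have hp3 : (p:ℝ) - 1 ≠ 0 := by linarith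
    field_simp
  have e2 : ∑ p ∈ S, ((N:ℝ)/p - 1) * Real.log p
      = N * mert N - ∑ p ∈ S, Real.log p := by
    rw [mert, ← hS, Finset.mul_sum, ← Finset.sum_sub_distrib]
    refine Finset.sum_congr rfl fun p hp => ?_
    have hp1 : (0:ℝ) < p := by exact_mod_cast (hmem p hp).1.pos
    field_simp
  have hup : Real.log (Nat.factorial N : ℝ)
      ≤ N * mert N + N * ∑ p ∈ S, Real.log p / (p * ((p:ℝ) - 1)) := by
    rw [hkey, ← e1]
    refine Finset.sum_le_sum fun p hp => ?_
    exact mul_le_mul_of_nonneg_right (legendre_up (hmem p hp).1 (hmem p hp).2) (hlogp p hp)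
  have hlo : N * mert N - ∑ p ∈ S, Real.log p ≤ Real.log (Nat.factorial N : ℝ) := by
    rw [hkey, ← e2]
    refine Finset.sum_le_sum fun p hp => ?_
    exact mul_le_mul_of_nonneg_right (legendre_lo (hmem p hp).1 (hmem p hp).2) (hlogp p hp)
  have hθ := theta_le N
  have hfup := log_factorial_up N
  have hflo := log_factorial_lo N
  have h1 : mert N ≤ Real.log N + Real.log 4 := by
    have hmul : N * mert N ≤ N * (Real.log N + Real.log 4) := by
      rw [mul_add]
      linarith
    exact le_of_mul_le_mul_left hmul hN0
  have h2 : Real.log N - 9 ≤ mert N := by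
    have hmul : N * (Real.log N - 9) ≤ N * mert N := by
      have h8 : N * (∑ p ∈ S, Real.log p / (p * ((p:ℝ) - 1))) ≤ N * 8 :=
        mul_le_mul_of_nonneg_left htel hN0.le
      nlinarith
    exact le_of_mul_le_mul_left hmul hN0
  have hlog4 : Real.log 4 ≤ 3 := by
    nlinarith [Real.log_le_sub_one_of_pos (by norm_num : (0:ℝ) < 4)]
  rw [abs_le]
  constructor <;> linarith

/-- Real-variable version. -/
lemma mertens1' (t : ℝ) (h : 1 ≤ t) :
    |(∑ k ∈ Icc 0 ⌊t⌋₊, c k) - Real.log t| ≤ 13 := by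
  rw [sum_c]
  have hf1 : 1 ≤ ⌊t⌋₊ := Nat.le_floor (by exact_mod_cast h)
  have h12 := mertens1 ⌊t⌋₊ hf1
  have hfl : (⌊t⌋₊ : ℝ) ≤ t := Nat.floor_le (by linarith)
  have hfl2 : t < ⌊t⌋₊ + 1 := Nat.lt_floor_add_one t
  have hpos : (1:ℝ) ≤ (⌊t⌋₊:ℝ) := by exact_mod_cast hf1
  have hub : Real.log t ≤ Real.log (⌊t⌋₊:ℝ) + Real.log 2 := by
    rw [← Real.log_mul (by linarith) (by norm_num)]
    exact Real.log_le_log (by linarith) (by linarith)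
  have hlb : Real.log (⌊t⌋₊:ℝ) ≤ Real.log t := Real.log_le_log (by linarith) hfl
  have hl2 : Real.log 2 ≤ 1 := by
    nlinarith [Real.log_le_sub_one_of_pos (by norm_num : (0:ℝ) < 2)]
  rw [abs_le] at h12 ⊢
  constructor <;> linarith

lemma mert_nonneg (N : ℕ) : 0 ≤ mert N := by
  rw [mert]
  refine Finset.sum_nonneg fun p hp => ?_
  have h2 : 2 ≤ p := ((mem_filter.mp hp).2).two_le
  have : (1:ℝ) ≤ p := by exact_mod_cast le_trans (by norm_num) h2
  have := Real.log_nonneg this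
  positivity

lemma mert_mono {m N : ℕ} (h : m ≤ N) : mert m ≤ mert N := by
  rw [mert, mert]
  refine Finset.sum_le_sum_of_subset_of_nonneg
    (Finset.filter_subset_filter _ (Finset.Icc_subset_Icc_right h)) fun p hp _ => ?_
  have h2 : 2 ≤ p := ((mem_filter.mp hp).2).two_le
  have : (1:ℝ) ≤ p := by exact_mod_cast le_trans (by norm_num) h2
  have := Real.log_nonneg this
  positivity

end ChebMertens

set_option maxHeartbeats 1000000 in
open ChebMertens Real MeasureTheory in
theorem chebyshev_mertens :
    ∃ C : ℝ, 0 < C ∧ ∀ N : ℕ, 3 ≤ N →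
      |(∑ p ∈ (Finset.Icc 1 N).filter Nat.Prime, (1 : ℝ) / p)
        - Real.log (Real.log N)| ≤ C := by
  have hlog32 : 0 < Real.log (3/2) := Real.log_pos (by norm_num)
  have hlog3 : 0 < Real.log 3 := Real.log_pos (by norm_num)
  refine ⟨1 + 13 / Real.log 3 + |Real.log (Real.log (3/2))| + 13 / Real.log (3/2) + 1,
    by positivity, ?_⟩
  intro N hN
  have hN3 : (3:ℝ) ≤ (N:ℝ) := by exact_mod_cast hN
  have hab : (3/2:ℝ) ≤ (N:ℝ) := by linarith
  have hlogN : Real.log 3 ≤ Real.log N := Real.log_le_log (by norm_num) hN3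
  have hlogNpos : 0 < Real.log N := lt_of_lt_of_le hlog3 hlogN
  -- the function f = 1 / log and its derivative
  set f : ℝ → ℝ := fun t => (Real.log t)⁻¹ with hf
  set g : ℝ → ℝ := fun t => 1 / (t * Real.log t ^ 2) with hg
  have hder : ∀ t : ℝ, 3/2 ≤ t → HasDerivAt f (-(g t)) t := by
    intro t ht
    have ht0 : (0:ℝ) < t := by linarith
    have hlt : 0 < Real.log t := Real.log_pos (by linarith)
    have h := (Real.hasDerivAt_log (ne_of_gt ht0)).inv (ne_of_gt hlt)
    have h2 : HasDerivAt f (-t⁻¹ / Real.log t ^ 2) t := h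
    convert h2 using 1
    rw [hg]
    field_simp
  have hf_diff : ∀ t ∈ Set.Icc (3/2:ℝ) (N:ℝ), DifferentiableAt ℝ f t :=
    fun t ht => (hder t ht.1).differentiableAt
  have hderiv_eq : ∀ t : ℝ, 3/2 ≤ t → deriv f t = -(g t) :=
    fun t ht => (hder t ht).deriv
  have hsub : Set.Icc (3/2:ℝ) (N:ℝ) ⊆ {(0:ℝ)}ᶜ := by
    intro t ht
    simp only [Set.mem_compl_iff, Set.mem_singleton_iff]
    have := ht.1
    intro h0; rw [h0] at this; norm_num at this
  have hg_cont : ContinuousOn g (Set.Icc (3/2:ℝ) (N:ℝ)) := by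
    refine continuousOn_const.div (continuousOn_id.mul
      ((Real.continuousOn_log.mono hsub).pow 2)) ?_
    intro t ht
    have ht1 : (3/2:ℝ) ≤ t := ht.1
    have hlt : 0 < Real.log t := Real.log_pos (by linarith)
    have ht0 : (0:ℝ) < t := by linarith
    exact ne_of_gt (show (0:ℝ) < id t * Real.log t ^ 2 by simp only [id_eq]; positivity)
  have hf_int : IntegrableOn (deriv f) (Set.Icc (3/2:ℝ) (N:ℝ)) := by
    refine (hg_cont.neg.integrableOn_Icc).congr_fun ?_ measurableSet_Icc
    intro t ht
    exact (hderiv_eq t ht.1).symm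
  -- Abel summation
  have habel := sum_mul_eq_sub_sub_integral_mul c (f := f) (a := 3/2) (b := (N:ℝ))
    (by norm_num) hab hf_diff hf_int
  have hfa : ⌊(3/2:ℝ)⌋₊ = 1 := by
    rw [Nat.floor_eq_iff (by norm_num)]
    norm_num
  have hfb : ⌊((N:ℝ))⌋₊ = N := Nat.floor_natCast N
  rw [hfa, hfb] at habel
  have hA1 : ∑ k ∈ Icc 0 1, c k = 0 := by
    rw [sum_c]
    rw [mert]
    rw [show (Finset.Icc 1 1).filter Nat.Prime = ∅ by decide]
    simp
  rw [hA1, mul_zero, sub_zero] at habel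
  -- identify the sum with the sum of 1/p
  have hLHS : ∑ k ∈ Ioc 1 N, f k * c k
      = ∑ p ∈ (Finset.Icc 1 N).filter Nat.Prime, (1:ℝ)/p := by
    have hset : (Finset.Icc 1 N).filter Nat.Prime = (Finset.Ioc 1 N).filter Nat.Prime := by
      ext p
      simp only [mem_filter, mem_Icc, mem_Ioc]
      constructor
      · rintro ⟨⟨h1, h2⟩, hp⟩; exact ⟨⟨hp.one_lt, h2⟩, hp⟩
      · rintro ⟨⟨h1, h2⟩, hp⟩; exact ⟨⟨by omega, h2⟩, hp⟩
    rw [hset, Finset.sum_filter]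
    refine Finset.sum_congr rfl fun k hk => ?_
    by_cases hp : k.Prime
    · simp only [c, if_pos hp, hf]
      have hk2 : (2:ℝ) ≤ k := by exact_mod_cast hp.two_le
      have hlk : Real.log k ≠ 0 := ne_of_gt (Real.log_pos (by linarith))
      field_simp
    · simp [c, hp]
  rw [hLHS] at habel
  -- rewrite the integral: deriv f * A = -(g * A)
  set A : ℝ → ℝ := fun t => ∑ k ∈ Icc 0 ⌊t⌋₊, c k with hA
  have hIeq : ∫ t in Set.Ioc (3/2:ℝ) (N:ℝ), deriv f t * A t
      = -∫ t in Set.Ioc (3/2:ℝ) (N:ℝ), g t * A t := by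
    rw [← integral_neg]
    refine setIntegral_congr_fun measurableSet_Ioc fun t ht => ?_
    rw [hderiv_eq t (le_of_lt ht.1)]
    ring
  rw [hIeq] at habel
  -- integrability facts
  have hA_mble : Measurable A := by
    have hm : Measurable fun n : ℕ => ∑ k ∈ Icc 0 n, c k := measurable_from_top
    exact hm.comp Nat.measurable_floor
  have hA_nonneg : ∀ t : ℝ, 0 ≤ A t := fun t => Finset.sum_nonneg fun k _ => c_nonneg k
  have hA_le : ∀ t : ℝ, t ≤ (N:ℝ) → A t ≤ mert N := by
    intro t ht
    show (∑ k ∈ Icc 0 ⌊t⌋₊, c k) ≤ mert N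
    rw [sum_c]
    refine mert_mono ?_
    rcases le_or_gt 0 t with h0 | h0
    · have h4 := Nat.floor_le_floor ht
      rwa [Nat.floor_natCast] at h4
    · rw [Nat.floor_of_nonpos h0.le]; exact Nat.zero_le N
  have hg_nonneg : ∀ t : ℝ, 3/2 ≤ t → 0 ≤ g t := by
    intro t ht
    have hlt : 0 < Real.log t := Real.log_pos (by linarith)
    have ht0 : (0:ℝ) < t := by linarith
    rw [hg]; positivity
  have hg_le : ∀ t : ℝ, 3/2 ≤ t → g t ≤ 1 / ((3/2) * Real.log (3/2) ^ 2) := by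
    intro t ht
    have hlt : Real.log (3/2) ≤ Real.log t := Real.log_le_log (by norm_num) ht
    have ht0 : (0:ℝ) < t := by linarith
    rw [hg]
    apply one_div_le_one_div_of_le (by positivity)
    have h1 : Real.log (3/2) ^ 2 ≤ Real.log t ^ 2 := by nlinarith
    nlinarith
  have hgA_int : IntegrableOn (fun t => g t * A t) (Set.Ioc (3/2:ℝ) (N:ℝ)) := by
    refine Measure.integrableOn_of_bounded (M := (1 / ((3/2) * Real.log (3/2) ^ 2)) * mert N)
      (ne_of_lt measure_Ioc_lt_top) ?_ ?_
    · have hg_mble : Measurable g := by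
        apply Measurable.div measurable_const
        exact measurable_id.mul (Real.measurable_log.pow_const 2)
      exact (hg_mble.mul hA_mble).aestronglyMeasurable
    · filter_upwards [ae_restrict_mem measurableSet_Ioc] with t ht
      have h1 : 3/2 ≤ t := le_of_lt ht.1
      rw [Real.norm_eq_abs, abs_of_nonneg (mul_nonneg (hg_nonneg t h1) (hA_nonneg t))]
      exact mul_le_mul (hg_le t h1) (hA_le t ht.2) (hA_nonneg t) (by positivity)
  have hglog_int : IntegrableOn (fun t => g t * Real.log t) (Set.Ioc (3/2:ℝ) (N:ℝ)) :=
    ((hg_cont.mul (Real.continuousOn_log.mono hsub)).integrableOn_Icc).mono_set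
      Set.Ioc_subset_Icc_self
  have hg_int : IntegrableOn g (Set.Ioc (3/2:ℝ) (N:ℝ)) :=
    (hg_cont.integrableOn_Icc).mono_set Set.Ioc_subset_Icc_self
  have hdiff_int : IntegrableOn (fun t => g t * (A t - Real.log t))
      (Set.Ioc (3/2:ℝ) (N:ℝ)) := by
    refine (hgA_int.sub hglog_int).congr (Filter.Eventually.of_forall fun t => ?_)
    simp only [Pi.sub_apply]
    ring
  -- split the integral
  have hsplit : ∫ t in Set.Ioc (3/2:ℝ) (N:ℝ), g t * A t
      = (∫ t in Set.Ioc (3/2:ℝ) (N:ℝ), g t * Real.log t)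
        + ∫ t in Set.Ioc (3/2:ℝ) (N:ℝ), g t * (A t - Real.log t) := by
    rw [← integral_add hglog_int hdiff_int]
    refine setIntegral_congr_fun measurableSet_Ioc fun t ht => ?_
    ring
  -- compute the main integral via FTC
  have hmain : ∫ t in Set.Ioc (3/2:ℝ) (N:ℝ), g t * Real.log t
      = Real.log (Real.log N) - Real.log (Real.log (3/2)) := by
    have heq : ∀ t ∈ Set.Ioc (3/2:ℝ) (N:ℝ), g t * Real.log t = (t * Real.log t)⁻¹ := by
      intro t ht
      have h1 : (3/2:ℝ) ≤ t := le_of_lt ht.1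
      have hlt : 0 < Real.log t := Real.log_pos (by linarith)
      have ht0 : (0:ℝ) < t := by linarith
      rw [hg]
      field_simp
    rw [setIntegral_congr_fun measurableSet_Ioc heq, ← intervalIntegral.integral_of_le hab]
    refine intervalIntegral.integral_eq_sub_of_hasDerivAt
      (f := fun t => Real.log (Real.log t)) (fun t ht => ?_) ?_
    · rw [Set.uIcc_of_le hab] at ht
      have h1 : (3/2:ℝ) ≤ t := ht.1
      have hlt : 0 < Real.log t := Real.log_pos (by linarith)
      have ht0 : (0:ℝ) < t := by linarith
      have h := (Real.hasDerivAt_log (ne_of_gt hlt)).comp t (Real.hasDerivAt_log (ne_of_gt ht0))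
      have h2 : HasDerivAt (fun t => Real.log (Real.log t)) ((Real.log t)⁻¹ * t⁻¹) t := h
      refine h2.congr_deriv ?_
      show (Real.log t)⁻¹ * t⁻¹ = (t * Real.log t)⁻¹
      rw [mul_inv]
      ring
    · refine ContinuousOn.intervalIntegrable ?_
      rw [Set.uIcc_of_le hab]
      refine ContinuousOn.inv₀ (continuousOn_id.mul (Real.continuousOn_log.mono hsub)) ?_
      intro t ht
      have h1 : (3/2:ℝ) ≤ t := ht.1
      have hlt : 0 < Real.log t := Real.log_pos (by linarith)
      have ht0 : (0:ℝ) < t := by linarith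
      simpa using (mul_pos ht0 hlt).ne'
  -- compute the integral of g via FTC
  have hgval : ∫ t in Set.Ioc (3/2:ℝ) (N:ℝ), g t
      = (Real.log (3/2))⁻¹ - (Real.log N)⁻¹ := by
    rw [← intervalIntegral.integral_of_le hab]
    have hft : ∫ t in (3/2:ℝ)..(N:ℝ), g t
        = (-(Real.log (N:ℝ))⁻¹) - (-(Real.log (3/2:ℝ))⁻¹) := by
      refine intervalIntegral.integral_eq_sub_of_hasDerivAt
        (f := fun t => -(Real.log t)⁻¹) (fun t ht => ?_) ?_
      · rw [Set.uIcc_of_le hab] at ht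
        have h := (hder t ht.1).neg
        rw [neg_neg] at h
        exact h
      · refine ContinuousOn.intervalIntegrable ?_
        rw [Set.uIcc_of_le hab]
        exact hg_cont
    rw [hft]
    ring
  -- bound the error integral
  have herr : |∫ t in Set.Ioc (3/2:ℝ) (N:ℝ), g t * (A t - Real.log t)|
      ≤ 13 / Real.log (3/2) := by
    have h1 : |∫ t in Set.Ioc (3/2:ℝ) (N:ℝ), g t * (A t - Real.log t)|
        ≤ ∫ t in Set.Ioc (3/2:ℝ) (N:ℝ), |g t * (A t - Real.log t)| := by
      calc |∫ t in Set.Ioc (3/2:ℝ) (N:ℝ), g t * (A t - Real.log t)|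
          = ‖∫ t in Set.Ioc (3/2:ℝ) (N:ℝ), g t * (A t - Real.log t)‖ :=
            (Real.norm_eq_abs _).symm
        _ ≤ ∫ t in Set.Ioc (3/2:ℝ) (N:ℝ), ‖g t * (A t - Real.log t)‖ :=
            norm_integral_le_integral_norm _
        _ = ∫ t in Set.Ioc (3/2:ℝ) (N:ℝ), |g t * (A t - Real.log t)| :=
            setIntegral_congr_fun measurableSet_Ioc fun t _ => Real.norm_eq_abs _
    have h2 : ∫ t in Set.Ioc (3/2:ℝ) (N:ℝ), |g t * (A t - Real.log t)|
        ≤ ∫ t in Set.Ioc (3/2:ℝ) (N:ℝ), 13 * g t := by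
      refine setIntegral_mono_on hdiff_int.abs (hg_int.const_mul 13)
        measurableSet_Ioc fun t ht => ?_
      have ht1 : (3/2:ℝ) ≤ t := le_of_lt ht.1
      rw [abs_mul, abs_of_nonneg (hg_nonneg t ht1)]
      have hm := mertens1' t (by linarith)
      rw [hA]
      calc g t * |(∑ k ∈ Icc 0 ⌊t⌋₊, c k) - Real.log t| ≤ g t * 13 :=
            mul_le_mul_of_nonneg_left hm (hg_nonneg t ht1)
        _ = 13 * g t := by ring
    have h3 : ∫ t in Set.Ioc (3/2:ℝ) (N:ℝ), 13 * g t ≤ 13 / Real.log (3/2) := by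
      rw [integral_const_mul, hgval]
      have hNi : 0 ≤ (Real.log N)⁻¹ := by positivity
      have h4 : 13 / Real.log (3/2) = 13 * (Real.log (3/2))⁻¹ := div_eq_mul_inv _ _
      rw [h4]
      nlinarith
    linarith
  -- final assembly
  have hmert := mertens1 N (by omega)
  have hmb : |mert N| ≤ Real.log N + 12 := by
    calc |mert N| = |(mert N - Real.log N) + Real.log N| := by ring_nf
      _ ≤ |mert N - Real.log N| + |Real.log N| := abs_add_le _ _
      _ ≤ 12 + Real.log N := by rw [abs_of_pos hlogNpos]; linarith
      _ = Real.log N + 12 := by ring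
  have hdivb : |f (N:ℝ) * (∑ k ∈ Icc 0 N, c k)| ≤ 1 + 13 / Real.log 3 := by
    rw [sum_c, hf]
    rw [show (fun t : ℝ => (Real.log t)⁻¹) ((N:ℕ):ℝ) = (Real.log (N:ℝ))⁻¹ from rfl]
    rw [abs_mul, abs_inv, abs_of_pos hlogNpos]
    rw [inv_mul_eq_div, div_le_iff₀ hlogNpos]
    have h12 : 12 * Real.log N ≥ 12 * Real.log 3 := by nlinarith
    have h13 : (13 / Real.log 3) * Real.log N ≥ 13 := by
      rw [div_mul_eq_mul_div, ge_iff_le, le_div_iff₀ hlog3]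
      nlinarith
    nlinarith [hmb, hlogNpos]
  -- put habel together
  rw [hsplit, hmain] at habel
  set E := ∫ t in Set.Ioc (3/2:ℝ) (N:ℝ), g t * (A t - Real.log t) with hE
  -- habel : ∑ 1/p = f N * (∑ Icc 0 N c) - -( (loglogN - loglog(3/2)) + E )
  rw [habel]
  have habs := abs_le.mp herr
  have habs2 := abs_le.mp hdivb
  have h32a := abs_le.mp (le_refl |Real.log (Real.log (3/2))|)
  have hx : -|Real.log (Real.log (3/2))| ≤ Real.log (Real.log (3/2)) ∧
      Real.log (Real.log (3/2)) ≤ |Real.log (Real.log (3/2))| :=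
    ⟨neg_abs_le _, le_abs_self _⟩
  rw [abs_le]
  constructor <;>
    linarith [habs.1, habs.2, habs2.1, habs2.2, hx.1, hx.2]
end

section
/- Erdős's multiplication table theorem (weak form): the number of integers n ≤ N² expressible as n = a·b with 1 ≤ a, b ≤ N is o(N²) as N → ∞. -/
open Finset Filter
open scoped Classical

set_option maxHeartbeats 1000000

noncomputable def pg (n : ℕ) : ℝ := if n.Prime then 1 / n else 0

noncomputable def pS (x : ℕ) : ℝ := ∑ n ∈ Finset.range (x + 1), pg n

def Px (x : ℕ) : Finset ℕ := (Finset.range (x + 1)).filter Nat.Prime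

lemma pg_nonneg (n : ℕ) : 0 ≤ pg n := by
  unfold pg; split <;> positivity

lemma pS_nonneg (x : ℕ) : 0 ≤ pS x := Finset.sum_nonneg fun n _ => pg_nonneg n

lemma pS_tendsto : Tendsto pS atTop atTop := by
  have h : ¬ Summable pg := by
    have := not_summable_one_div_on_primes
    have e : pg = Set.indicator {p | Nat.Prime p} (fun n : ℕ => (1:ℝ)/n) := by
      ext n
      simp [pg, Set.indicator, Set.mem_setOf_eq]
    rw [e]
    exact this
  have h2 := (not_summable_iff_tendsto_nat_atTop_of_nonneg pg_nonneg).mp h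
  have : pS = (fun n => ∑ i ∈ Finset.range n, pg i) ∘ (fun x => x + 1) := rfl
  rw [this]
  exact h2.comp (tendsto_add_atTop_nat 1)


lemma pg_block (j : ℕ) (hj : 1 ≤ j) :
    ∑ n ∈ Finset.Ico (2 ^ j + 1) (2 ^ (j + 1) + 1), pg n ≤ 4 / j := by
  set B := (Finset.Ico (2 ^ j + 1) (2 ^ (j + 1) + 1)).filter Nat.Prime with hB
  have hsum : ∑ n ∈ Finset.Ico (2 ^ j + 1) (2 ^ (j + 1) + 1), pg n
      = ∑ n ∈ B, (1 / n : ℝ) := by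
    rw [hB, Finset.sum_filter]
    exact Finset.sum_congr rfl fun n _ => rfl
  -- cardinality bound
  have hprod_lb : (2 : ℕ) ^ (j * B.card) ≤ ∏ p ∈ B, p := by
    rw [pow_mul]
    rw [← Finset.prod_const]
    apply Finset.prod_le_prod'
    intro p hp
    have := (Finset.mem_filter.mp hp).1
    have := (Finset.mem_Ico.mp this).1
    omega
  have hprod_ub : ∏ p ∈ B, p ≤ 2 ^ 2 ^ (j + 2) := by
    calc ∏ p ∈ B, p ≤ primorial (2 ^ (j + 1)) := by
          apply Finset.prod_le_prod_of_subset_of_one_le'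
          · intro p hp
            rw [hB, Finset.mem_filter] at hp
            rw [Finset.mem_filter]
            refine ⟨Finset.mem_range.mpr ?_, hp.2⟩
            have := (Finset.mem_Ico.mp hp.1).2
            omega
          · intro p hp _
            exact (Finset.mem_filter.mp hp).2.one_lt.le
      _ ≤ 4 ^ 2 ^ (j + 1) := primorial_le_4_pow _
      _ = 2 ^ 2 ^ (j + 2) := by
          rw [show (4 : ℕ) = 2 ^ 2 by norm_num, ← pow_mul, pow_succ]
          ring_nf
  have hcard : j * B.card ≤ 2 ^ (j + 2) :=
    (Nat.pow_le_pow_iff_right one_lt_two).mp (hprod_lb.trans hprod_ub)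
  have hterm : ∀ n ∈ B, (1 / n : ℝ) ≤ 1 / 2 ^ j := by
    intro n hn
    have := (Finset.mem_Ico.mp (Finset.mem_filter.mp hn).1).1
    apply one_div_le_one_div_of_le (by positivity)
    exact_mod_cast by omega
  calc ∑ n ∈ Finset.Ico (2 ^ j + 1) (2 ^ (j + 1) + 1), pg n
      ≤ B.card * (1 / 2 ^ j) := by
        rw [hsum]
        calc ∑ n ∈ B, (1 / n : ℝ) ≤ ∑ _n ∈ B, (1 / 2 ^ j : ℝ) := Finset.sum_le_sum hterm
          _ = B.card * (1 / 2 ^ j) := by rw [Finset.sum_const, nsmul_eq_mul]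
    _ ≤ 4 / j := by
        have hj' : (0:ℝ) < j := by exact_mod_cast Nat.pos_of_ne_zero (by omega)
        have he : (B.card : ℝ) * (1 / 2 ^ j) = B.card / 2 ^ j := by ring
        rw [he, div_le_div_iff₀ (by positivity) hj']
        have h1 : (j : ℝ) * B.card ≤ 2 ^ (j + 2) := by exact_mod_cast hcard
        have h2 : ((2 : ℝ)) ^ (j + 2) = 4 * 2 ^ j := by ring
        nlinarith [h1, h2]

lemma pg_tele (L : ℕ) (hL : 1 ≤ L) : ∀ m : ℕ,
    ∑ n ∈ Finset.Ico (2 ^ L + 1) (2 ^ (L + m) + 1), pg n ≤ ∑ j ∈ Finset.Ico L (L + m), (4 / j : ℝ) := by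
  intro m
  induction m with
  | zero => simp
  | succ m ih =>
      have h1 : 2 ^ L + 1 ≤ 2 ^ (L + m) + 1 := by
        have := Nat.pow_le_pow_right (by norm_num : 1 ≤ 2) (Nat.le_add_right L m); omega
      have h2 : 2 ^ (L + m) + 1 ≤ 2 ^ (L + m + 1) + 1 := by
        have := Nat.pow_le_pow_right (by norm_num : 1 ≤ 2) (Nat.le_succ (L + m)); omega
      have hsplit := Finset.sum_Ico_consecutive pg h1 h2
      rw [show L + (m + 1) = L + m + 1 from rfl, ← hsplit,
        Finset.sum_Ico_succ_top (Nat.le_add_right L m)]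
      have hblock := pg_block (L + m) (by omega)
      exact add_le_add ih hblock

lemma pS_gap {x : ℕ} (hx : 4 ≤ x) : pS (x ^ 2) ≤ pS x + 8 := by
  set L := Nat.log 2 x with hLdef
  have hx0 : x ≠ 0 := by omega
  have hL2 : 2 ≤ L := by
    rw [hLdef, Nat.le_log_iff_pow_le one_lt_two hx0]; exact hx
  have hpow_le : 2 ^ L ≤ x := Nat.pow_log_le_self 2 hx0
  have hlt : x < 2 ^ (L + 1) := Nat.lt_pow_succ_log_self one_lt_two x
  have hxx : x ≤ x ^ 2 := by nlinarith
  have hsplit : pS x + ∑ n ∈ Finset.Ico (x + 1) (x ^ 2 + 1), pg n = pS (x ^ 2) := by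
    unfold pS
    rw [Finset.range_eq_Ico, Finset.range_eq_Ico]
    exact Finset.sum_Ico_consecutive pg (by omega) (by omega)
  have hsub : ∑ n ∈ Finset.Ico (x + 1) (x ^ 2 + 1), pg n
      ≤ ∑ n ∈ Finset.Ico (2 ^ L + 1) (2 ^ (L + (L + 2)) + 1), pg n := by
    apply Finset.sum_le_sum_of_subset_of_nonneg
    · apply Finset.Ico_subset_Ico (by omega)
      have : x ^ 2 < 2 ^ (L + 1) * 2 ^ (L + 1) := by nlinarith
      have : x ^ 2 < 2 ^ (L + (L + 2)) := by
        calc x ^ 2 < 2 ^ (L + 1) * 2 ^ (L + 1) := this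
          _ = 2 ^ (L + (L + 2)) := by rw [← pow_add]; ring_nf
      omega
    · intro n _ _; exact pg_nonneg n
  have htele := pg_tele L (by omega) (L + 2)
  have hbound : ∑ j ∈ Finset.Ico L (L + (L + 2)), (4 / j : ℝ) ≤ 8 := by
    have hcard : (Finset.Ico L (L + (L + 2))).card = L + 2 := by simp
    have hLpos : (0:ℝ) < L := by exact_mod_cast (by omega : 0 < L)
    calc ∑ j ∈ Finset.Ico L (L + (L + 2)), (4 / j : ℝ)
        ≤ ∑ _j ∈ Finset.Ico L (L + (L + 2)), (4 / L : ℝ) := by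
          apply Finset.sum_le_sum
          intro j hj
          have hLj : L ≤ j := (Finset.mem_Ico.mp hj).1
          apply div_le_div_of_nonneg_left (by norm_num) hLpos
          exact_mod_cast hLj
      _ = (L + 2) * (4 / L) := by rw [Finset.sum_const, hcard, nsmul_eq_mul]; push_cast; ring
      _ ≤ 8 := by
          have e : ((L:ℝ) + 2) * (4 / L) = (4 * L + 8) / L := by field_simp; ring
          rw [e, div_le_iff₀ hLpos]
          have : (2:ℝ) ≤ L := by exact_mod_cast hL2
          linarith
  linarith [hsub.trans htele, hbound, hsplit]


lemma pS_eq (x : ℕ) : pS x = ∑ p ∈ Px x, (1 / p : ℝ) := by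
  rw [pS, Px, Finset.sum_filter]
  exact Finset.sum_congr rfl fun n _ => rfl

lemma primeFactors_eq {x n : ℕ} (hn : n ∈ Finset.Icc 1 x) :
    n.primeFactors = (Px x).filter (· ∣ n) := by
  rw [Finset.mem_Icc] at hn
  ext p
  rw [Nat.mem_primeFactors, Px, Finset.mem_filter, Finset.mem_filter, Finset.mem_range]
  constructor
  · rintro ⟨hp, hdvd, _⟩
    exact ⟨⟨by have := Nat.le_of_dvd (by omega) hdvd; omega, hp⟩, hdvd⟩
  · rintro ⟨⟨_, hp⟩, hdvd⟩
    exact ⟨hp, hdvd, by omega⟩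

lemma omega_eq_sum {x n : ℕ} (hn : n ∈ Finset.Icc 1 x) :
    (n.primeFactors.card : ℝ) = ∑ p ∈ Px x, (if p ∣ n then (1:ℝ) else 0) := by
  rw [primeFactors_eq hn]
  exact_mod_cast (Finset.sum_boole (s := Px x) (p := (· ∣ n))).symm

lemma count_dvd (x d : ℕ) : ((Finset.Icc 1 x).filter (fun n => d ∣ n)).card = x / d := by
  have : Finset.Icc 1 x = Finset.Ioc 0 x := rfl
  rw [this]
  exact Nat.Ioc_filter_dvd_card_eq_div x d

lemma sum_ite_dvd (x d : ℕ) :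
    ∑ n ∈ Finset.Icc 1 x, (if d ∣ n then (1:ℝ) else 0) = ((x / d : ℕ) : ℝ) := by
  rw [Finset.sum_boole]
  exact_mod_cast count_dvd x d

lemma nat_div_lb (x d : ℕ) (hd : 0 < d) : (x : ℝ) / d - 1 ≤ ((x / d : ℕ) : ℝ) := by
  have h := Nat.div_add_mod x d
  have h2 : x % d < d := Nat.mod_lt x hd
  have hd' : (0:ℝ) < d := by exact_mod_cast hd
  rw [div_sub_one hd'.ne', div_le_iff₀ hd']
  have h' : (d:ℝ) * ((x / d : ℕ) : ℝ) + ((x % d : ℕ) : ℝ) = x := by exact_mod_cast h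
  have h2' : ((x % d : ℕ) : ℝ) < d := by exact_mod_cast h2
  nlinarith [h', h2']

lemma card_Px_le (x : ℕ) : (Px x).card ≤ x := by
  have : Px x ⊆ Finset.Ioc 0 x := by
    intro p hp
    rw [Px, Finset.mem_filter, Finset.mem_range] at hp
    rw [Finset.mem_Ioc]
    exact ⟨hp.2.pos, by omega⟩
  simpa using Finset.card_le_card this

lemma mean_lower (x : ℕ) :
    (x : ℝ) * pS x - x ≤ ∑ n ∈ Finset.Icc 1 x, (n.primeFactors.card : ℝ) := by
  have h1 : ∑ n ∈ Finset.Icc 1 x, (n.primeFactors.card : ℝ)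
      = ∑ p ∈ Px x, ((x / p : ℕ) : ℝ) := by
    rw [Finset.sum_congr rfl fun n hn => omega_eq_sum hn, Finset.sum_comm]
    exact Finset.sum_congr rfl fun p _ => sum_ite_dvd x p
  rw [h1]
  have h2 : ∑ p ∈ Px x, ((x:ℝ) / p - 1) ≤ ∑ p ∈ Px x, ((x / p : ℕ) : ℝ) :=
    Finset.sum_le_sum fun p hp => nat_div_lb x p (Finset.mem_filter.mp hp).2.pos
  refine le_trans ?_ h2
  rw [Finset.sum_sub_distrib, Finset.sum_const, nsmul_eq_mul, mul_one]
  have h3 : ∑ p ∈ Px x, (x:ℝ) / p = x * pS x := by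
    rw [pS_eq, Finset.mul_sum]
    exact Finset.sum_congr rfl fun p _ => by rw [mul_one_div]
  rw [h3]
  have h4 : ((Px x).card : ℝ) ≤ x := by exact_mod_cast card_Px_le x
  linarith

lemma second_moment (x : ℕ) :
    ∑ n ∈ Finset.Icc 1 x, (n.primeFactors.card : ℝ) ^ 2
      ≤ x * pS x ^ 2 + x * pS x := by
  have expand : ∑ n ∈ Finset.Icc 1 x, (n.primeFactors.card : ℝ) ^ 2
      = ∑ p ∈ Px x, ∑ q ∈ Px x, ((x / (if p = q then p else p * q) : ℕ) : ℝ) := by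
    have e1 : ∀ n ∈ Finset.Icc 1 x, (n.primeFactors.card : ℝ) ^ 2
        = ∑ p ∈ Px x, ∑ q ∈ Px x, (if p ∣ n ∧ q ∣ n then (1:ℝ) else 0) := by
      intro n hn
      rw [sq, omega_eq_sum hn, Finset.sum_mul_sum]
      refine Finset.sum_congr rfl fun p _ => Finset.sum_congr rfl fun q _ => ?_
      by_cases h1 : p ∣ n <;> by_cases h2 : q ∣ n <;> simp [h1, h2]
    rw [Finset.sum_congr rfl e1, Finset.sum_comm]
    refine Finset.sum_congr rfl fun p hp => ?_
    rw [Finset.sum_comm]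
    refine Finset.sum_congr rfl fun q hq => ?_
    have hp' := (Finset.mem_filter.mp hp).2
    have hq' := (Finset.mem_filter.mp hq).2
    by_cases hpq : p = q
    · subst hpq
      rw [if_pos rfl, ← sum_ite_dvd x p]
      exact Finset.sum_congr rfl fun n _ => by by_cases h : p ∣ n <;> simp [h]
    · simp only [if_neg hpq]
      rw [← sum_ite_dvd x (p * q)]
      refine Finset.sum_congr rfl fun n _ => ?_
      have hco : Nat.Coprime p q := (Nat.coprime_primes hp' hq').mpr hpq
      have : (p ∣ n ∧ q ∣ n) ↔ p * q ∣ n := by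
        constructor
        · rintro ⟨h1, h2⟩; exact hco.mul_dvd_of_dvd_of_dvd h1 h2
        · intro h; exact ⟨(dvd_mul_right p q).trans h, (dvd_mul_left q p).trans h⟩
      rw [if_congr this rfl rfl]
  rw [expand]
  have bound : ∀ p ∈ Px x, ∀ q ∈ Px x,
      ((x / (if p = q then p else p * q) : ℕ) : ℝ)
        ≤ (x:ℝ) * (1/p) * (1/q) + (if p = q then (x:ℝ) * (1/p) else 0) := by
    intro p hp q hq
    have hp' := (Finset.mem_filter.mp hp).2
    have hq' := (Finset.mem_filter.mp hq).2
    have hppos : (0:ℝ) < p := by exact_mod_cast hp'.pos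
    have hqpos : (0:ℝ) < q := by exact_mod_cast hq'.pos
    by_cases hpq : p = q
    · subst hpq
      simp only [if_pos rfl]
      have hge : (0:ℝ) ≤ (x:ℝ) * (1/p) * (1/p) := by positivity
      calc ((x / p : ℕ) : ℝ) ≤ (x:ℝ) / p := Nat.cast_div_le
        _ ≤ (x:ℝ) * (1/p) * (1/p) + (x:ℝ) * (1/p) := by
            have e : (x:ℝ) * (1/p) = (x:ℝ) / p := mul_one_div (x:ℝ) (p:ℝ)
            linarith
    · simp only [if_neg hpq, add_zero]
      calc ((x / (p * q) : ℕ) : ℝ) ≤ (x:ℝ) / (p * q) := by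
            rw [← Nat.cast_mul]; exact Nat.cast_div_le
        _ = (x:ℝ) * (1/p) * (1/q) := by field_simp
  calc ∑ p ∈ Px x, ∑ q ∈ Px x, ((x / (if p = q then p else p * q) : ℕ) : ℝ)
      ≤ ∑ p ∈ Px x, ∑ q ∈ Px x,
          ((x:ℝ) * (1/p) * (1/q) + (if p = q then (x:ℝ) * (1/p) else 0)) :=
        Finset.sum_le_sum fun p hp => Finset.sum_le_sum fun q hq => bound p hp q hq
    _ = x * pS x ^ 2 + x * pS x := by
        have inner : ∀ p ∈ Px x,
            (∑ q ∈ Px x, ((x:ℝ) * (1/p) * (1/q) + (if p = q then (x:ℝ) * (1/p) else 0)))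
              = (x:ℝ) * (1/p) * pS x + (x:ℝ) * (1/p) := by
          intro p hp
          rw [Finset.sum_add_distrib, Finset.sum_ite_eq (Px x) p (fun _ => (x:ℝ) * (1/p)),
            if_pos hp]
          congr 1
          rw [pS_eq, Finset.mul_sum]
        rw [Finset.sum_congr rfl inner, Finset.sum_add_distrib]
        have e1 : ∑ p ∈ Px x, ((x:ℝ) * (1/p) * pS x) = x * pS x ^ 2 := by
          rw [← Finset.sum_mul, ← Finset.mul_sum, ← pS_eq]
          ring
        have e2 : ∑ p ∈ Px x, ((x:ℝ) * (1/p)) = x * pS x := by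
          rw [← Finset.mul_sum, ← pS_eq]
        rw [e1, e2]

lemma tele_sq : ∀ x : ℕ, 1 ≤ x → ∑ m ∈ Finset.Icc 2 x, (1 / (m:ℝ) ^ 2) ≤ 1 - 1 / (x:ℝ) := by
  intro x hx
  induction x, hx using Nat.le_induction with
  | base => norm_num
  | succ x hx ih =>
      rw [Finset.sum_Icc_succ_top (by omega)]
      have hX : (1:ℝ) ≤ x := by exact_mod_cast hx
      have hXpos : (0:ℝ) < x := by linarith
      have key : 1 / ((x:ℝ) + 1) ^ 2 ≤ 1 / x - 1 / ((x:ℝ) + 1) := by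
        have h1 : (1:ℝ) / x - 1 / ((x:ℝ) + 1) = 1 / (x * ((x:ℝ) + 1)) := by
          field_simp
          ring
        rw [h1]
        apply one_div_le_one_div_of_le (by positivity)
        nlinarith
      push_cast
      linarith

lemma geom_p {r : ℝ} (hr : 0 < r) (hr2 : r ≤ 1 / 2) :
    ∀ x : ℕ, ∑ k ∈ Finset.Icc 2 x, r ^ k ≤ 2 * r ^ 2 := by
  have main : ∀ x : ℕ, 1 ≤ x → ∑ k ∈ Finset.Icc 2 x, r ^ k ≤ 2 * r ^ 2 - 2 * r ^ (x + 1) := by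
    intro x hx
    induction x, hx using Nat.le_induction with
    | base => simp
    | succ x hx ih =>
        rw [Finset.sum_Icc_succ_top (by omega)]
        have h : 2 * r ^ (x + 2) ≤ r ^ (x + 1) := by
          have : r ^ (x + 2) = r ^ (x + 1) * r := by ring
          rw [this]
          nlinarith [pow_pos hr (x + 1)]
        have : r ^ (x + 1 + 1) = r ^ (x + 2) := rfl
        nlinarith [ih]
  intro x
  rcases Nat.eq_zero_or_pos x with h | h
  · subst h; simp; positivity
  · exact (main x h).trans (by nlinarith [pow_pos hr (x + 1)])

lemma Omega_eq_sum_factorization {n : ℕ} (hn : n ≠ 0) :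
    n.primeFactorsList.length = ∑ p ∈ n.primeFactors, n.factorization p := by
  have h := Multiset.toFinset_sum_count_eq (n.primeFactorsList : Multiset ℕ)
  simp only [Multiset.coe_card] at h
  rw [← h]
  have e : (↑n.primeFactorsList : Multiset ℕ).toFinset = n.primeFactors := Nat.toFinset_factors n
  rw [e]
  refine Finset.sum_congr rfl fun p _ => ?_
  rw [← Nat.primeFactorsList_count_eq]
  exact Multiset.coe_count p n.primeFactorsList

lemma factorization_le_x {x n p : ℕ} (hn : n ∈ Finset.Icc 1 x) (hp : p.Prime) :
    n.factorization p ≤ x := by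
  rw [Finset.mem_Icc] at hn
  have h1 : p ^ n.factorization p ∣ n := Nat.ordProj_dvd n p
  have h2 : p ^ n.factorization p ≤ n := Nat.le_of_dvd (by omega) h1
  have h3 : n.factorization p < 2 ^ n.factorization p := Nat.lt_two_pow_self
  have h4 : 2 ^ n.factorization p ≤ p ^ n.factorization p :=
    Nat.pow_le_pow_left hp.two_le _
  omega

lemma vp_sub_one {x n p : ℕ} (hn : n ∈ Finset.Icc 1 x) (hp : p ∈ n.primeFactors) :
    ((n.factorization p : ℝ)) - 1 = ∑ k ∈ Finset.Icc 2 x, (if p ^ k ∣ n then (1:ℝ) else 0) := by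
  have hn' := Finset.mem_Icc.mp hn
  have hp' := Nat.prime_of_mem_primeFactors hp
  have hv1 : 1 ≤ n.factorization p := (Nat.Prime.factorization_pos_of_dvd hp'
    (by omega) (Nat.dvd_of_mem_primeFactors hp))
  have hvx := factorization_le_x hn hp'
  have hfilter : (Finset.Icc 2 x).filter (fun k => p ^ k ∣ n) = Finset.Icc 2 (n.factorization p) := by
    ext k
    rw [Finset.mem_filter, Finset.mem_Icc, Finset.mem_Icc,
      Nat.Prime.pow_dvd_iff_le_factorization hp' (by omega)]
    omega
  rw [Finset.sum_boole, hfilter]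
  rw [Nat.card_Icc]
  push_cast [hv1]
  ring

lemma omdiff_le {x n : ℕ} (hn : n ∈ Finset.Icc 1 x) :
    (n.primeFactorsList.length : ℝ) - n.primeFactors.card
      ≤ ∑ p ∈ Px x, ∑ k ∈ Finset.Icc 2 x, (if p ^ k ∣ n then (1:ℝ) else 0) := by
  have hn' := Finset.mem_Icc.mp hn
  have e1 : (n.primeFactorsList.length : ℝ) - n.primeFactors.card
      = ∑ p ∈ n.primeFactors, ((n.factorization p : ℝ) - 1) := by
    rw [Finset.sum_sub_distrib, Finset.sum_const, nsmul_eq_mul, mul_one,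
      Omega_eq_sum_factorization (by omega : n ≠ 0)]
    push_cast
    ring
  rw [e1, Finset.sum_congr rfl fun p hp => vp_sub_one hn hp]
  apply Finset.sum_le_sum_of_subset_of_nonneg
  · rw [primeFactors_eq hn]; exact Finset.filter_subset _ _
  · intro p _ _
    apply Finset.sum_nonneg
    intro k _
    split <;> norm_num

lemma omdiff_sum (x : ℕ) :
    ∑ n ∈ Finset.Icc 1 x, ((n.primeFactorsList.length : ℝ) - n.primeFactors.card)
      ≤ 2 * x := by
  rcases Nat.eq_zero_or_pos x with rfl | hx
  · simp
  calc ∑ n ∈ Finset.Icc 1 x, ((n.primeFactorsList.length : ℝ) - n.primeFactors.card)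
      ≤ ∑ n ∈ Finset.Icc 1 x, ∑ p ∈ Px x, ∑ k ∈ Finset.Icc 2 x,
          (if p ^ k ∣ n then (1:ℝ) else 0) :=
        Finset.sum_le_sum fun n hn => omdiff_le hn
    _ = ∑ p ∈ Px x, ∑ k ∈ Finset.Icc 2 x, ((x / p ^ k : ℕ) : ℝ) := by
        rw [Finset.sum_comm]
        refine Finset.sum_congr rfl fun p _ => ?_
        rw [Finset.sum_comm]
        exact Finset.sum_congr rfl fun k _ => sum_ite_dvd x (p ^ k)
    _ ≤ ∑ p ∈ Px x, (2 * (x:ℝ) * (1 / (p:ℝ) ^ 2)) := by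
        refine Finset.sum_le_sum fun p hp => ?_
        have hp' := (Finset.mem_filter.mp hp).2
        have hp2 : (2:ℝ) ≤ p := by exact_mod_cast hp'.two_le
        have hppos : (0:ℝ) < p := by linarith
        calc ∑ k ∈ Finset.Icc 2 x, ((x / p ^ k : ℕ) : ℝ)
            ≤ ∑ k ∈ Finset.Icc 2 x, (x:ℝ) * (1 / (p:ℝ)) ^ k := by
              refine Finset.sum_le_sum fun k _ => ?_
              calc ((x / p ^ k : ℕ) : ℝ) ≤ (x:ℝ) / (p ^ k : ℕ) := Nat.cast_div_le
                _ = (x:ℝ) * (1 / (p:ℝ)) ^ k := by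
                    push_cast
                    rw [one_div_pow, mul_one_div]
          _ = (x:ℝ) * ∑ k ∈ Finset.Icc 2 x, (1 / (p:ℝ)) ^ k := by rw [Finset.mul_sum]
          _ ≤ (x:ℝ) * (2 * (1 / (p:ℝ)) ^ 2) := by
              apply mul_le_mul_of_nonneg_left _ (by positivity)
              exact geom_p (by positivity) (by
                rw [div_le_div_iff₀ hppos (by norm_num)]; linarith) x
          _ = 2 * (x:ℝ) * (1 / (p:ℝ) ^ 2) := by rw [one_div_pow]; ring
    _ ≤ ∑ m ∈ Finset.Icc 2 x, (2 * (x:ℝ) * (1 / (m:ℝ) ^ 2)) := by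
        apply Finset.sum_le_sum_of_subset_of_nonneg
        · intro p hp
          have hp' := (Finset.mem_filter.mp hp).2
          have := Finset.mem_range.mp (Finset.mem_filter.mp hp).1
          rw [Finset.mem_Icc]
          exact ⟨hp'.two_le, by omega⟩
        · intro m _ _; positivity
    _ = 2 * (x:ℝ) * ∑ m ∈ Finset.Icc 2 x, (1 / (m:ℝ) ^ 2) := by rw [Finset.mul_sum]
    _ ≤ 2 * (x:ℝ) * 1 := by
        apply mul_le_mul_of_nonneg_left _ (by positivity)
        have h := tele_sq x hx
        have : (0:ℝ) < x := by exact_mod_cast hx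
        have : 0 ≤ 1 / (x:ℝ) := by positivity
        linarith
    _ = 2 * x := by ring

lemma omdiff_nonneg (n : ℕ) : (0:ℝ) ≤ (n.primeFactorsList.length : ℝ) - n.primeFactors.card := by
  have : n.primeFactors.card ≤ n.primeFactorsList.length := by
    rw [← Nat.toFinset_factors]
    exact List.toFinset_card_le _
  have := Nat.cast_le (α := ℝ) |>.mpr this
  linarith

lemma omdiff_markov (x : ℕ) {c : ℝ} (hc : 0 < c) :
    (((Finset.Icc 1 x).filter
        (fun n => c ≤ (n.primeFactorsList.length : ℝ) - n.primeFactors.card)).card : ℝ) * c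
      ≤ 2 * x := by
  set F := (Finset.Icc 1 x).filter
    (fun n => c ≤ (n.primeFactorsList.length : ℝ) - n.primeFactors.card) with hF
  calc (F.card : ℝ) * c = ∑ _n ∈ F, c := by rw [Finset.sum_const, nsmul_eq_mul]
    _ ≤ ∑ n ∈ F, ((n.primeFactorsList.length : ℝ) - n.primeFactors.card) :=
        Finset.sum_le_sum fun n hn => (Finset.mem_filter.mp hn).2
    _ ≤ ∑ n ∈ Finset.Icc 1 x, ((n.primeFactorsList.length : ℝ) - n.primeFactors.card) :=
        Finset.sum_le_sum_of_subset_of_nonneg (Finset.filter_subset _ _)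
          (fun n _ _ => omdiff_nonneg n)
    _ ≤ 2 * x := omdiff_sum x

lemma variance (x : ℕ) :
    ∑ n ∈ Finset.Icc 1 x, ((n.primeFactors.card : ℝ) - pS x) ^ 2 ≤ 3 * x * pS x := by
  have e : ∀ n ∈ Finset.Icc 1 x, ((n.primeFactors.card : ℝ) - pS x) ^ 2
      = (n.primeFactors.card : ℝ) ^ 2 - 2 * pS x * (n.primeFactors.card : ℝ) + pS x ^ 2 := by
    intro n _; ring
  rw [Finset.sum_congr rfl e, Finset.sum_add_distrib, Finset.sum_sub_distrib,
    ← Finset.mul_sum, Finset.sum_const, Nat.card_Icc, nsmul_eq_mul]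
  have h1 := second_moment x
  have h2 := mean_lower x
  have h3 := pS_nonneg x
  have hcard : ((x + 1 - 1 : ℕ) : ℝ) = x := by push_cast; ring
  rw [hcard]
  nlinarith [mul_nonneg h3 (sub_nonneg.mpr h2),
    mul_le_mul_of_nonneg_left h2 (by linarith : (0:ℝ) ≤ 2 * pS x)]

lemma cheb (x : ℕ) {t : ℝ} (ht : 0 < t) :
    (((Finset.Icc 1 x).filter
        (fun n => t ≤ |(n.primeFactors.card : ℝ) - pS x|)).card : ℝ) * t ^ 2
      ≤ 3 * x * pS x := by
  set F := (Finset.Icc 1 x).filter (fun n => t ≤ |(n.primeFactors.card : ℝ) - pS x|) with hF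
  calc (F.card : ℝ) * t ^ 2 = ∑ _n ∈ F, t ^ 2 := by rw [Finset.sum_const, nsmul_eq_mul]
    _ ≤ ∑ n ∈ F, ((n.primeFactors.card : ℝ) - pS x) ^ 2 := by
        refine Finset.sum_le_sum fun n hn => ?_
        have h := (Finset.mem_filter.mp hn).2
        calc t ^ 2 ≤ |(n.primeFactors.card : ℝ) - pS x| ^ 2 :=
              pow_le_pow_left₀ ht.le h 2
          _ = ((n.primeFactors.card : ℝ) - pS x) ^ 2 := sq_abs _
    _ ≤ ∑ n ∈ Finset.Icc 1 x, ((n.primeFactors.card : ℝ) - pS x) ^ 2 :=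
        Finset.sum_le_sum_of_subset_of_nonneg (Finset.filter_subset _ _)
          (fun n _ _ => sq_nonneg _)
    _ ≤ 3 * x * pS x := variance x

lemma main_bound {N : ℕ} (hN : 4 ≤ N) (hS : 40 ≤ pS N) :
    (((Finset.Icc 1 (N ^ 2)).filter (fun n =>
        ∃ a ∈ Finset.Icc 1 N, ∃ b ∈ Finset.Icc 1 N, n = a * b)).card : ℝ)
      ≤ 3304 / pS N * N ^ 2 := by
  have hSpos : (0:ℝ) < pS N := by linarith
  have ht : (0:ℝ) < pS N / 10 := by linarith
  have hgap := pS_gap hN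
  have hS2nn := pS_nonneg (N ^ 2)
  set t : ℝ := pS N / 10 with htdef
  set M := (Finset.Icc 1 (N ^ 2)).filter (fun n =>
      ∃ a ∈ Finset.Icc 1 N, ∃ b ∈ Finset.Icc 1 N, n = a * b) with hM
  set H1 := (Finset.Icc 1 (N ^ 2)).filter
      (fun n => t ≤ |(n.primeFactors.card : ℝ) - pS (N ^ 2)|) with hH1def
  set H2 := (Finset.Icc 1 (N ^ 2)).filter
      (fun n => 7 / 10 * pS N - 8 ≤ (n.primeFactorsList.length : ℝ) - n.primeFactors.card)
      with hH2def
  set BadA := (Finset.Icc 1 N).filter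
      (fun a => (a.primeFactors.card : ℝ) < pS N - t) with hBadAdef
  set I1 := (BadA ×ˢ Finset.Icc 1 N).image (fun p => p.1 * p.2) with hI1def
  set I2 := (Finset.Icc 1 N ×ˢ BadA).image (fun p => p.1 * p.2) with hI2def
  -- inclusion
  have hsub : M ⊆ H1 ∪ H2 ∪ I1 ∪ I2 := by
    intro n hn
    simp only [hM, Finset.mem_filter] at hn
    obtain ⟨hn1, a, ha, b, hb, rfl⟩ := hn
    have ha' := Finset.mem_Icc.mp ha
    have hb' := Finset.mem_Icc.mp hb
    by_cases hA : (a.primeFactors.card : ℝ) < pS N - t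
    · refine Finset.mem_union_left _ (Finset.mem_union_right _ ?_)
      refine Finset.mem_image.mpr ⟨(a, b), Finset.mem_product.mpr ⟨?_, hb⟩, rfl⟩
      exact Finset.mem_filter.mpr ⟨ha, hA⟩
    by_cases hB : (b.primeFactors.card : ℝ) < pS N - t
    · refine Finset.mem_union_right _ ?_
      refine Finset.mem_image.mpr ⟨(a, b), Finset.mem_product.mpr ⟨ha, ?_⟩, rfl⟩
      exact Finset.mem_filter.mpr ⟨hb, hB⟩
    push_neg at hA hB
    by_cases hn2 : t ≤ |((a * b).primeFactors.card : ℝ) - pS (N ^ 2)|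
    · refine Finset.mem_union_left _ (Finset.mem_union_left _ (Finset.mem_union_left _ ?_))
      exact Finset.mem_filter.mpr ⟨hn1, hn2⟩
    · refine Finset.mem_union_left _ (Finset.mem_union_left _ (Finset.mem_union_right _ ?_))
      refine Finset.mem_filter.mpr ⟨hn1, ?_⟩
      push_neg at hn2
      have habs : ((a * b).primeFactors.card : ℝ) < pS (N ^ 2) + t := by
        have := neg_abs_le (((a * b).primeFactors.card : ℝ) - pS (N ^ 2))
        have := le_abs_self (((a * b).primeFactors.card : ℝ) - pS (N ^ 2))
        linarith
      have hΩmul : ((a * b).primeFactorsList.length : ℝ)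
          = a.primeFactorsList.length + b.primeFactorsList.length := by
        have hperm := Nat.perm_primeFactorsList_mul
          (by omega : a ≠ 0) (by omega : b ≠ 0)
        rw [hperm.length_eq, List.length_append]
        push_cast
        ring
      have hωa := omdiff_nonneg a
      have hωb := omdiff_nonneg b
      rw [hΩmul]
      linarith
  -- cardinalities
  have hcard : (M.card : ℝ) ≤ H1.card + H2.card + (BadA.card * N + N * BadA.card) := by
    have h1 : M.card ≤ (H1 ∪ H2 ∪ I1 ∪ I2).card := Finset.card_le_card hsub
    have h2 : (H1 ∪ H2 ∪ I1 ∪ I2).card ≤ H1.card + H2.card + I1.card + I2.card := by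
      calc (H1 ∪ H2 ∪ I1 ∪ I2).card ≤ (H1 ∪ H2 ∪ I1).card + I2.card := Finset.card_union_le _ _
        _ ≤ (H1 ∪ H2).card + I1.card + I2.card := by
            have := Finset.card_union_le (H1 ∪ H2) I1; omega
        _ ≤ H1.card + H2.card + I1.card + I2.card := by
            have := Finset.card_union_le H1 H2; omega
    have h3 : I1.card ≤ BadA.card * N := by
      calc I1.card ≤ (BadA ×ˢ Finset.Icc 1 N).card := Finset.card_image_le
        _ = BadA.card * N := by rw [Finset.card_product, Nat.card_Icc]; simp
    have h4 : I2.card ≤ N * BadA.card := by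
      calc I2.card ≤ (Finset.Icc 1 N ×ˢ BadA).card := Finset.card_image_le
        _ = N * BadA.card := by rw [Finset.card_product, Nat.card_Icc]; simp
    have h5 := h1.trans h2
    have c5 : (M.card : ℝ) ≤ H1.card + H2.card + I1.card + I2.card := by exact_mod_cast h5
    have c3 : (I1.card : ℝ) ≤ (BadA.card : ℝ) * N := by exact_mod_cast h3
    have c4 : (I2.card : ℝ) ≤ (N : ℝ) * BadA.card := by exact_mod_cast h4
    linarith
  -- analytic bounds
  have hH1 : (H1.card : ℝ) * t ^ 2 ≤ 3 * ((N:ℝ) ^ 2) * pS (N ^ 2) := by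
    have := cheb (N ^ 2) ht
    push_cast at this ⊢
    linarith
  have hH2 : (H2.card : ℝ) * (7 / 10 * pS N - 8) ≤ 2 * (N:ℝ) ^ 2 := by
    have := omdiff_markov (N ^ 2) (c := 7 / 10 * pS N - 8) (by linarith)
    push_cast at this ⊢
    linarith
  have hBad : (BadA.card : ℝ) * t ^ 2 ≤ 3 * N * pS N := by
    have hsub2 : BadA ⊆ (Finset.Icc 1 N).filter
        (fun a => t ≤ |(a.primeFactors.card : ℝ) - pS N|) := by
      intro a ha
      obtain ⟨ha1, ha2⟩ := Finset.mem_filter.mp ha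
      refine Finset.mem_filter.mpr ⟨ha1, ?_⟩
      have := neg_abs_le ((a.primeFactors.card : ℝ) - pS N)
      linarith
    have hc := Finset.card_le_card hsub2
    have hc' : (BadA.card : ℝ) ≤ (((Finset.Icc 1 N).filter
        (fun a => t ≤ |(a.primeFactors.card : ℝ) - pS N|)).card : ℝ) := by exact_mod_cast hc
    have := cheb N ht
    nlinarith [sq_nonneg t]
  -- combine
  have hSN2 : pS (N ^ 2) ≤ 9 * pS N := by linarith
  have hH1' : (H1.card : ℝ) * pS N ≤ 2700 * (N:ℝ) ^ 2 := by
    have h1nn : (0:ℝ) ≤ (H1.card : ℝ) := by positivity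
    have key : (H1.card : ℝ) * pS N * pS N ≤ 2700 * (N:ℝ) ^ 2 * pS N := by
      have e : (H1.card : ℝ) * t ^ 2 = (H1.card : ℝ) * pS N * pS N / 100 := by
        rw [htdef]; ring
      nlinarith [mul_nonneg (mul_nonneg (by positivity : (0:ℝ) ≤ 3 * (N:ℝ)^2) hSpos.le) hSpos.le]
    exact le_of_mul_le_mul_right key hSpos
  have hH2' : (H2.card : ℝ) * pS N ≤ 4 * (N:ℝ) ^ 2 := by
    have h2nn : (0:ℝ) ≤ (H2.card : ℝ) := by positivity
    nlinarith [mul_nonneg h2nn (by linarith : (0:ℝ) ≤ 7 / 10 * pS N - 8 - pS N / 2)]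
  have hBad' : (BadA.card : ℝ) * pS N ≤ 300 * N := by
    have hbnn : (0:ℝ) ≤ (BadA.card : ℝ) := by positivity
    have key : (BadA.card : ℝ) * pS N * pS N ≤ 300 * (N:ℝ) * pS N := by
      have e : (BadA.card : ℝ) * t ^ 2 = (BadA.card : ℝ) * pS N * pS N / 100 := by
        rw [htdef]; ring
      nlinarith
    exact le_of_mul_le_mul_right key hSpos
  have htotal : (M.card : ℝ) * pS N ≤ 3304 * (N:ℝ) ^ 2 := by
    have hNnn : (0:ℝ) ≤ (N:ℝ) := by positivity
    have e1 : (BadA.card : ℝ) * N * pS N = (N:ℝ) * ((BadA.card : ℝ) * pS N) := by ring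
    have e2 : (N:ℝ) * (BadA.card : ℝ) * pS N = (N:ℝ) * ((BadA.card : ℝ) * pS N) := by ring
    have h7 : (N:ℝ) * ((BadA.card : ℝ) * pS N) ≤ (N:ℝ) * (300 * N) :=
      mul_le_mul_of_nonneg_left hBad' hNnn
    nlinarith [mul_le_mul_of_nonneg_right hcard hSpos.le]
  rw [div_mul_eq_mul_div, le_div_iff₀ hSpos]
  exact htotal

theorem erdos_multiplication_table_weak :
    Tendsto (fun N : ℕ =>
        (((Finset.Icc 1 (N ^ 2)).filter (fun n =>
            ∃ a ∈ Finset.Icc 1 N, ∃ b ∈ Finset.Icc 1 N, n = a * b)).card : ℝ) / (N : ℝ) ^ 2)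
      atTop (nhds 0) := by
  have hg : Tendsto (fun N : ℕ => 3304 / pS N) atTop (nhds 0) :=
    pS_tendsto.const_div_atTop 3304
  apply squeeze_zero'
  · exact Eventually.of_forall fun N => by positivity
  · filter_upwards [eventually_ge_atTop 4, pS_tendsto.eventually_ge_atTop 40] with N hN hS
    have hb := main_bound hN hS
    have hN2 : (0:ℝ) < (N:ℝ) ^ 2 := by
      have : (0:ℝ) < N := by exact_mod_cast (by omega : 0 < N)
      positivity
    rw [div_le_iff₀ hN2]
    calc (((Finset.Icc 1 (N ^ 2)).filter (fun n =>
            ∃ a ∈ Finset.Icc 1 N, ∃ b ∈ Finset.Icc 1 N, n = a * b)).card : ℝ)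
        ≤ 3304 / pS N * N ^ 2 := hb
      _ = 3304 / pS N * (N:ℝ) ^ 2 := by norm_num
  · exact hg
end
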